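/- For every dimension d ≥ 2, there exist two disjoint polytopes P and Q with vertices in {0,1}^d whose Euclidean distance is at most 1/√(d(d−1)). Concretely, the line segment from the origin to (1,…,1) and the simplex with vertices e_1,…,e_{d−1} (the first d−1 standard basis vectors) are disjoint and at distance exactly 1/√(d(d−1)). -/

import Mathlib

/-- For every d ≥ 2, the diagonal P = conv{0, (1,…,1)} of the hypercube
[0,1]^d and the simplex Q = conv{e_1,…,e_{d-1}} spanned by the first d-1 standard
basis vectors are disjoint 0/1-polytopes at distance at most 1/√(d(d-1)). -/
theorem stmt_4 (d : ℕ) (hd : 2 ≤ d) :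
    let P : Set (EuclideanSpace ℝ (Fin d)) :=
      segment ℝ (0 : EuclideanSpace ℝ (Fin d)) (WithLp.toLp 2 (fun _ => 1))
    let Q : Set (EuclideanSpace ℝ (Fin d)) :=
      convexHull ℝ {x | ∃ i : Fin d, (i : ℕ) < d - 1 ∧ x = EuclideanSpace.single i (1 : ℝ)}
    P ∩ Q = ∅ ∧ sInf (Set.image2 dist P Q) ≤ 1 / Real.sqrt (d * (d - 1)) := by
  intro P Q
  have he1 : 1 ≤ d - 1 := by omega
  set e := d - 1 with he
  have hde : d = e + 1 := by omega
  set t : Finset (Fin d) := Finset.univ.filter (fun i => (i : ℕ) < e) with ht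
  have hcard : t.card = e := by
    rw [ht]
    rw [Finset.card_filter]
    rw [Fin.sum_univ_eq_sum_range (fun i => if i < e then 1 else 0) d]
    rw [hde, Finset.sum_range_succ, if_neg (lt_irrefl e), add_zero]
    rw [Finset.sum_congr rfl (fun i hi => if_pos (Finset.mem_range.mp hi))]
    simp
  -- every point of Q has coordinate sum 1
  have hQsum : ∀ x ∈ Q, ∑ i, x i = 1 := by
    intro x hx
    have hconv : Convex ℝ {y : EuclideanSpace ℝ (Fin d) | ∑ i, y i = 1} := by
      intro y hy z hz a b ha hb hab
      simp only [Set.mem_setOf_eq] at *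
      have : ∀ i, (a • y + b • z) i = a * y i + b * z i := fun i => rfl
      simp only [this, Finset.sum_add_distrib, ← Finset.mul_sum, hy, hz]
      simpa using hab
    refine convexHull_min ?_ hconv hx
    rintro y ⟨i, hi, rfl⟩
    simp [EuclideanSpace.single_apply, Finset.sum_ite_eq']
  -- every point of Q has last coordinate zero
  have hlast : (⟨e, by omega⟩ : Fin d) = ⟨e, by omega⟩ := rfl
  have hQzero : ∀ x ∈ Q, x ⟨e, by omega⟩ = 0 := by
    intro x hx
    have hconv : Convex ℝ {y : EuclideanSpace ℝ (Fin d) | y ⟨e, by omega⟩ = 0} := by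
      intro y hy z hz a b ha hb hab
      simp only [Set.mem_setOf_eq] at *
      have : (a • y + b • z) ⟨e, by omega⟩ = a * y ⟨e, by omega⟩ + b * z ⟨e, by omega⟩ := rfl
      simp [this, hy, hz]
    refine convexHull_min ?_ hconv hx
    rintro y ⟨i, hi, rfl⟩
    have : (⟨e, by omega⟩ : Fin d) ≠ i := by
      intro h; apply absurd hi; simp [← h]; omega
    simp [EuclideanSpace.single_apply, this]
  constructor
  · ext x
    simp only [Set.mem_inter_iff, Set.mem_empty_iff_false, iff_false]
    rintro ⟨hxP, hxQ⟩
    obtain ⟨a, b, ha, hb, hab, hx⟩ := hxP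
    have hxb : ∀ i, x i = b := by
      intro i
      rw [← hx]
      show a * 0 + b * 1 = b
      ring
    have hb0 : b = 0 := by rw [← hxb ⟨e, by omega⟩]; exact hQzero x hxQ
    have := hQsum x hxQ
    simp [hxb, hb0] at this
  · -- distance bound
    set D : ℝ := (d : ℝ) with hD
    set E : ℝ := (e : ℝ) with hE
    have hE1 : (1 : ℝ) ≤ E := by rw [hE]; exact_mod_cast he1
    have hE0 : E ≠ 0 := by linarith
    have hDE : D = E + 1 := by rw [hD, hE, hde]; push_cast; ring
    have hD0 : D ≠ 0 := by rw [hDE]; linarith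
    -- the point p on the diagonal
    set p : EuclideanSpace ℝ (Fin d) := WithLp.toLp 2 (fun _ => D⁻¹) with hp
    have hpP : p ∈ P := by
      refine ⟨1 - D⁻¹, D⁻¹, ?_, ?_, by ring, ?_⟩
      · have : D⁻¹ ≤ 1 := by
          rw [inv_le_one_iff₀]; right; rw [hDE]; linarith
        linarith
      · positivity
      · ext i
        show (1 - D⁻¹) * 0 + D⁻¹ * 1 = D⁻¹
        ring
    -- the point q : barycenter of the simplex
    set q : EuclideanSpace ℝ (Fin d) := WithLp.toLp 2 (fun i => if (i : ℕ) < e then E⁻¹ else 0) with hq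
    have hqQ : q ∈ Q := by
      have hsum : ∑ _i ∈ t, E⁻¹ = 1 := by
        rw [Finset.sum_const, hcard, nsmul_eq_mul, ← hE, mul_inv_cancel₀ hE0]
      have := Finset.centerMass_mem_convexHull (R := ℝ) t (w := fun _ => E⁻¹)
        (z := fun i => EuclideanSpace.single i (1 : ℝ))
        (s := {x : EuclideanSpace ℝ (Fin d) |
          ∃ i : Fin d, (i : ℕ) < d - 1 ∧ x = EuclideanSpace.single i (1 : ℝ)})
        (fun i _ => by positivity) (by rw [hsum]; norm_num)
        (fun i hi => ⟨i, by simpa [ht] using hi, rfl⟩)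
      rw [Finset.centerMass_eq_of_sum_1 _ _ hsum] at this
      convert this using 1
      ext j
      have : (∑ i ∈ t, E⁻¹ • EuclideanSpace.single i (1 : ℝ)) j
          = ∑ i ∈ t, E⁻¹ * (if j = i then (1:ℝ) else 0) := by
        rw [WithLp.ofLp_sum, Finset.sum_apply]
        exact Finset.sum_congr rfl fun i _ => by
          simp [EuclideanSpace.single_apply]
      rw [hq, this]
      simp only [mul_ite, mul_one, mul_zero, Finset.sum_ite_eq t j (fun _ => E⁻¹)]
      simp [ht]
    -- compute the distance
    have hdist : dist p q = Real.sqrt (1 / (D * E)) := by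
      rw [EuclideanSpace.dist_eq]
      congr 1
      have hterm : ∀ i : Fin d, dist (p i) (q i) ^ 2
          = (fun n : ℕ => (D⁻¹ - if n < e then E⁻¹ else 0) ^ 2) (i : ℕ) := by
        intro i
        rw [Real.dist_eq, sq_abs, hp, hq]
      rw [Finset.sum_congr rfl fun i _ => hterm i]
      rw [Fin.sum_univ_eq_sum_range (fun n : ℕ => (D⁻¹ - if n < e then E⁻¹ else 0) ^ 2) d]
      rw [hde, Finset.sum_range_succ, if_neg (lt_irrefl e)]
      rw [Finset.sum_congr rfl (fun i hi => by rw [if_pos (Finset.mem_range.mp hi)])]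
      rw [Finset.sum_const, Finset.card_range, nsmul_eq_mul, ← hE]
      rw [hDE]
      field_simp
      ring
    calc sInf (Set.image2 dist P Q) ≤ dist p q := by
          apply csInf_le
          · exact ⟨0, by rintro r ⟨x, hx, y, hy, rfl⟩; exact dist_nonneg⟩
          · exact Set.mem_image2_of_mem hpP hqQ
      _ = 1 / Real.sqrt (D * (D - 1)) := by
          rw [hdist, hDE]
          rw [one_div, Real.sqrt_inv, one_div]
          ring_nf
      _ = 1 / Real.sqrt (d * (d - 1)) := by rw [hD]
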